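/- Let P be a finite group with subgroups W_1, W_2, W_3, each normal in P, such that W_i ∩ W_j = 1 and W_i W_j = P for every pair i ≠ j (a partial congruence partition with three normal components). Then P is abelian, P ≅ W_1 × W_2, and W_1 ≅ W_2 ≅ W_3. -/

import Mathlib

/-- Every element of `P` decomposes as a product from two subgroups joining to `⊤`,
one of which is normal. -/
theorem pcp_exists_mul {P : Type*} [Group P] (A B : Subgroup P) [B.Normal]
    (j : A ⊔ B = ⊤) (x : P) : ∃ a ∈ A, ∃ b ∈ B, x = a * b := by
  have hx : x ∈ (↑(A ⊔ B) : Set P) := by rw [j]; trivial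
  rw [Subgroup.mul_normal] at hx
  obtain ⟨a, ha, b, hb, rfl⟩ := hx
  exact ⟨a, ha, b, hb, rfl⟩

/-- If `A` and `B` are complementary with `B` normal, then `A ≃* P ⧸ B`. -/
noncomputable def pcp_equivQuot {P : Type*} [Group P] (A B : Subgroup P) [B.Normal]
    (h : A ⊓ B = ⊥) (j : A ⊔ B = ⊤) : ↥A ≃* P ⧸ B := by
  refine MulEquiv.ofBijective ((QuotientGroup.mk' B).comp A.subtype) ⟨?_, ?_⟩
  · intro a b hab
    have hB : (a : P)⁻¹ * (b : P) ∈ B := by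
      rw [← QuotientGroup.eq]
      exact hab
    have h1 : (a : P)⁻¹ * (b : P) ∈ A ⊓ B := ⟨A.mul_mem (A.inv_mem a.2) b.2, hB⟩
    rw [h, Subgroup.mem_bot] at h1
    have : (a : P) = (b : P) := by
      rw [← inv_mul_eq_one]; exact h1
    exact Subtype.ext this
  · intro q
    induction q using QuotientGroup.induction_on with
    | H x =>
      obtain ⟨a, ha, b, hb, rfl⟩ := pcp_exists_mul A B j x
      refine ⟨⟨a, ha⟩, ?_⟩
      simp only [MonoidHom.comp_apply, QuotientGroup.mk'_apply]
      rw [QuotientGroup.eq]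
      simpa using hb

/-- Sprague: if a finite group `P` has three normal subgroups `W1, W2, W3`
which pairwise intersect trivially and pairwise generate `P`, then `P` is abelian,
`P ≅ W1 × W2`, and `W1 ≅ W2 ≅ W3`. -/
theorem pcp_three_normal_components {P : Type*} [Group P] [Finite P]
    (W1 W2 W3 : Subgroup P) [W1.Normal] [W2.Normal] [W3.Normal]
    (h12 : W1 ⊓ W2 = ⊥) (h13 : W1 ⊓ W3 = ⊥) (h23 : W2 ⊓ W3 = ⊥)
    (j12 : W1 ⊔ W2 = ⊤) (j13 : W1 ⊔ W3 = ⊤) (j23 : W2 ⊔ W3 = ⊤) :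
    (∀ a b : P, a * b = b * a) ∧
    Nonempty (P ≃* (↥W1 × ↥W2)) ∧
    Nonempty (↥W1 ≃* ↥W2) ∧ Nonempty (↥W2 ≃* ↥W3) := by
  have c12 := Subgroup.commute_of_normal_of_disjoint W1 W2 ‹_› ‹_›
    (disjoint_iff.mpr h12)
  have c13 := Subgroup.commute_of_normal_of_disjoint W1 W3 ‹_› ‹_›
    (disjoint_iff.mpr h13)
  have c23 := Subgroup.commute_of_normal_of_disjoint W2 W3 ‹_› ‹_›
    (disjoint_iff.mpr h23)
  -- W1 is commutative
  have c11 : ∀ x y : P, x ∈ W1 → y ∈ W1 → Commute x y := by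
    intro x y hx hy
    obtain ⟨c, hc, d, hd, rfl⟩ := pcp_exists_mul W2 W3 j23 y
    exact (c12 x c hx hc).mul_right (c13 x d hx hd)
  -- P is abelian
  have habel : ∀ a b : P, a * b = b * a := by
    intro a b
    obtain ⟨a1, ha1, a2, ha2, rfl⟩ := pcp_exists_mul W1 W2 j12 a
    obtain ⟨b1, hb1, b2, hb2, rfl⟩ := pcp_exists_mul W1 W2 j12 b
    have e1 : Commute a1 b1 := c11 a1 b1 ha1 hb1
    have c22 : Commute a2 b2 := by
      obtain ⟨c, hc, d, hd, rfl⟩ := pcp_exists_mul W1 W3 j13 b2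
      exact (c12 c a2 hc ha2).symm.mul_right (c23 a2 d ha2 hd)
    exact (e1.mul_right (c12 a1 b2 ha1 hb2)).mul_left
      ((c12 b1 a2 hb1 ha2).symm.mul_right c22)
  refine ⟨habel, ?_, ?_, ?_⟩
  · -- P ≃* W1 × W2
    let f : ↥W1 × ↥W2 →* P :=
      { toFun := fun p => (p.1 : P) * (p.2 : P)
        map_one' := by simp
        map_mul' := by
          rintro ⟨a1, a2⟩ ⟨b1, b2⟩
          simp only [Prod.fst_mul, Prod.snd_mul, Subgroup.coe_mul]
          rw [mul_assoc, ← mul_assoc (b1 : P), habel (b1 : P) (a2 : P),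
            mul_assoc, mul_assoc] }
    have hinj : Function.Injective f := by
      rw [injective_iff_map_eq_one]
      rintro ⟨a, b⟩ hab
      have : (a : P) ∈ W1 ⊓ W2 := by
        refine ⟨a.2, ?_⟩
        have : (a : P) = (b : P)⁻¹ := by
          rw [← mul_eq_one_iff_eq_inv]; exact hab
        rw [this]; exact W2.inv_mem b.2
      rw [h12, Subgroup.mem_bot] at this
      have hb : (b : P) = 1 := by
        have hab' : (a : P) * (b : P) = 1 := hab
        rw [this, one_mul] at hab'
        exact hab' 
      exact Prod.ext (Subtype.ext this) (Subtype.ext hb)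
    have hsurj : Function.Surjective f := by
      intro x
      obtain ⟨a, ha, b, hb, rfl⟩ := pcp_exists_mul W1 W2 j12 x
      exact ⟨(⟨a, ha⟩, ⟨b, hb⟩), rfl⟩
    exact ⟨(MulEquiv.ofBijective f ⟨hinj, hsurj⟩).symm⟩
  · exact ⟨(pcp_equivQuot W1 W3 h13 j13).trans (pcp_equivQuot W2 W3 h23 j23).symm⟩
  · exact ⟨(pcp_equivQuot W2 W1 (by rw [inf_comm]; exact h12) (by rw [sup_comm]; exact j12)).trans
      (pcp_equivQuot W3 W1 (by rw [inf_comm]; exact h13) (by rw [sup_comm]; exact j13)).symm⟩
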